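/- Corollary to the uncertainty principle: Let U be an n×n unitary matrix with |U_{i,j}| ≤ c/√n for all i,j. For any unit vector v ∈ ℂ^n and subsets S, T with |S|·|T| ≤ n/(2c²), we have max(‖v_{S̄}‖, ‖(Uv)_{T̄}‖) ≥ 1/5. -/

import Mathlib

open Matrix

/-- Coordinate projection of `x` onto the set `S` (entries outside `S` set to `0`). -/
noncomputable def projE {n : ℕ} (S : Finset (Fin n)) (x : EuclideanSpace ℂ (Fin n)) :
    EuclideanSpace ℂ (Fin n) :=
  (WithLp.equiv 2 _).symm fun i => if i ∈ S then x i else 0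

/-- Matrix-vector multiplication, as a map of Euclidean spaces. -/
noncomputable def mulVecE {n : ℕ} (U : Matrix (Fin n) (Fin n) ℂ)
    (v : EuclideanSpace ℂ (Fin n)) : EuclideanSpace ℂ (Fin n) :=
  (WithLp.equiv 2 _).symm (U.mulVec (WithLp.equiv 2 _ v))

lemma aux_arith (p r q : ℝ) (hp0 : 0 ≤ p) (hr0 : 0 ≤ r) (hq0 : 0 ≤ q)
    (h1 : q ≤ p + r) (h2 : p ^ 2 ≤ 1 / 2) (h3 : r < 1 / 5) (h4 : 24 / 25 < q ^ 2) : False := by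
  nlinarith [mul_nonneg hp0 hr0, mul_le_mul h1 h1 hq0 (by linarith)]

lemma projE_apply {n : ℕ} (S : Finset (Fin n)) (x : EuclideanSpace ℂ (Fin n)) (i : Fin n) :
    projE S x i = if i ∈ S then x i else 0 := rfl

lemma mulVecE_apply {n : ℕ} (U : Matrix (Fin n) (Fin n) ℂ) (v : EuclideanSpace ℂ (Fin n))
    (i : Fin n) : mulVecE U v i = ∑ j, U i j * v j := rfl

lemma norm_sq_projE {n : ℕ} (S : Finset (Fin n)) (x : EuclideanSpace ℂ (Fin n)) :
    ‖projE S x‖ ^ 2 = ∑ i ∈ S, ‖x i‖ ^ 2 := by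
  rw [EuclideanSpace.norm_eq, Real.sq_sqrt (by positivity)]
  rw [← Finset.sum_filter_add_sum_filter_not Finset.univ (· ∈ S)]
  have h1 : ∑ i ∈ Finset.univ.filter (· ∈ S), ‖projE S x i‖ ^ 2 = ∑ i ∈ S, ‖x i‖ ^ 2 := by
    rw [Finset.filter_mem_eq_inter, Finset.univ_inter]
    exact Finset.sum_congr rfl fun i hi => by rw [projE_apply, if_pos hi]
  have h2 : ∑ i ∈ Finset.univ.filter (¬ · ∈ S), ‖projE S x i‖ ^ 2 = 0 := by
    apply Finset.sum_eq_zero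
    intro i hi
    rw [Finset.mem_filter] at hi
    rw [projE_apply, if_neg hi.2]
    simp
  rw [h1, h2, add_zero]

lemma norm_sq_split {n : ℕ} (S : Finset (Fin n)) (x : EuclideanSpace ℂ (Fin n)) :
    ‖projE S x‖ ^ 2 + ‖projE Sᶜ x‖ ^ 2 = ‖x‖ ^ 2 := by
  rw [norm_sq_projE, norm_sq_projE, EuclideanSpace.norm_eq, Real.sq_sqrt (by positivity)]
  rw [Finset.sum_add_sum_compl]

lemma norm_projE_le {n : ℕ} (S : Finset (Fin n)) (x : EuclideanSpace ℂ (Fin n)) :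
    ‖projE S x‖ ≤ ‖x‖ := by
  have h := norm_sq_split S x
  nlinarith [norm_nonneg (projE S x), norm_nonneg (projE Sᶜ x), norm_nonneg x,
    sq_nonneg ‖projE Sᶜ x‖]

lemma norm_mulVecE {n : ℕ} (U : Matrix (Fin n) (Fin n) ℂ)
    (hU : U ∈ Matrix.unitaryGroup (Fin n) ℂ) (v : EuclideanSpace ℂ (Fin n)) :
    ‖mulVecE U v‖ = ‖v‖ := by
  rw [show mulVecE U v = Matrix.toEuclideanLin U v from rfl]
  have key : inner ℂ (Matrix.toEuclideanLin U v) (Matrix.toEuclideanLin U v) = (inner ℂ v v : ℂ) := by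
    rw [← LinearMap.adjoint_inner_left, ← Matrix.toEuclideanLin_conjTranspose_eq_adjoint]
    have h2 : Matrix.toEuclideanLin Uᴴ (Matrix.toEuclideanLin U v) = v := by
      simp only [Matrix.toEuclideanLin_apply, WithLp.ofLp_toLp]
      rw [Matrix.mulVec_mulVec, show Uᴴ * U = 1 by
        simpa [Matrix.star_eq_conjTranspose] using hU.1]
      simp
    rw [h2]
  rw [@norm_eq_sqrt_re_inner ℂ, @norm_eq_sqrt_re_inner ℂ, key]

lemma projE_add {n : ℕ} (S : Finset (Fin n)) (x y : EuclideanSpace ℂ (Fin n)) :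
    projE S (x + y) = projE S x + projE S y := by
  ext i
  simp only [PiLp.add_apply, projE_apply]
  by_cases h : i ∈ S <;> simp [h]

lemma mulVecE_add {n : ℕ} (U : Matrix (Fin n) (Fin n) ℂ) (x y : EuclideanSpace ℂ (Fin n)) :
    mulVecE U (x + y) = mulVecE U x + mulVecE U y := by
  ext i
  simp only [PiLp.add_apply, mulVecE_apply, ← Finset.sum_add_distrib]
  exact Finset.sum_congr rfl fun j _ => by ring

lemma projE_self_compl {n : ℕ} (S : Finset (Fin n)) (x : EuclideanSpace ℂ (Fin n)) :
    projE S x + projE Sᶜ x = x := by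
  ext i
  simp only [PiLp.add_apply, projE_apply, Finset.mem_compl]
  by_cases h : i ∈ S <;> simp [h]

theorem stmt5 (n : ℕ) (U : Matrix (Fin n) (Fin n) ℂ)
    (hU : U ∈ Matrix.unitaryGroup (Fin n) ℂ) (c : ℝ) (hc : 0 < c)
    (hent : ∀ i j, ‖U i j‖ ≤ c / Real.sqrt n)
    (S T : Finset (Fin n)) (hST : (S.card * T.card : ℝ) ≤ n / (2 * c ^ 2))
    (v : EuclideanSpace ℂ (Fin n)) (hv : ‖v‖ = 1) :
    max ‖projE Sᶜ v‖ ‖projE Tᶜ (mulVecE U v)‖ ≥ 1 / 5 := by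
  by_contra hcon
  rw [not_le, max_lt_iff] at hcon
  obtain ⟨ha, hb⟩ := hcon
  have hn : 0 < n := by
    rcases Nat.eq_zero_or_pos n with h | h
    · subst h
      have : v = 0 := Subsingleton.elim v 0
      rw [this, norm_zero] at hv
      norm_num at hv
    · exact h
  have hnR : (0 : ℝ) < n := by exact_mod_cast hn
  set w := mulVecE U v with hw
  set vS := projE S v with hvS
  set vSc := projE Sᶜ v with hvSc
  -- ‖vS‖ ≤ 1
  have hvS_le : ‖vS‖ ≤ 1 := hv ▸ norm_projE_le S v
  -- ‖projE T w‖² = 1 - ‖projE Tᶜ w‖² > 24/25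
  have hwn : ‖w‖ = 1 := by rw [hw, norm_mulVecE U hU v, hv]
  have hTsplit := norm_sq_split T w
  rw [hwn] at hTsplit
  have hTbig : ‖projE T w‖ ^ 2 > 24 / 25 := by nlinarith [norm_nonneg (projE Tᶜ w)]
  -- decompose w
  have hdec : projE T w = projE T (mulVecE U vS) + projE T (mulVecE U vSc) := by
    rw [hw, ← projE_add, ← mulVecE_add, projE_self_compl]
  -- Key entrywise estimate: for i, ‖(U vS) i‖² ≤ c²/n * S.card * ‖vS‖²
  have hentry : ∀ i : Fin n, ‖mulVecE U vS i‖ ^ 2 ≤ c ^ 2 / n * S.card * ‖vS‖ ^ 2 := by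
    intro i
    have h1 : ‖mulVecE U vS i‖ ≤ c / Real.sqrt n * ∑ j ∈ S, ‖v j‖ := by
      rw [mulVecE_apply]
      calc ‖∑ j, U i j * vS j‖ ≤ ∑ j, ‖U i j * vS j‖ := norm_sum_le _ _
        _ = ∑ j ∈ S, ‖U i j * vS j‖ := by
            rw [← Finset.sum_filter_add_sum_filter_not Finset.univ (· ∈ S)]
            have h2 : ∑ j ∈ Finset.univ.filter (¬ · ∈ S), ‖U i j * vS j‖ = 0 := by
              apply Finset.sum_eq_zero
              intro j hj
              rw [Finset.mem_filter] at hj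
              rw [hvS, projE_apply, if_neg hj.2, mul_zero, norm_zero]
            rw [h2, add_zero, Finset.filter_mem_eq_inter, Finset.univ_inter]
        _ ≤ ∑ j ∈ S, c / Real.sqrt n * ‖v j‖ := by
            apply Finset.sum_le_sum
            intro j hj
            rw [norm_mul, hvS, projE_apply, if_pos hj]
            exact mul_le_mul_of_nonneg_right (hent i j) (norm_nonneg _)
        _ = c / Real.sqrt n * ∑ j ∈ S, ‖v j‖ := by rw [Finset.mul_sum]
    have h2 : (∑ j ∈ S, ‖v j‖) ^ 2 ≤ S.card * ∑ j ∈ S, ‖v j‖ ^ 2 :=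
      sq_sum_le_card_mul_sum_sq
    have h3 : (∑ j ∈ S, ‖v j‖ ^ 2) = ‖vS‖ ^ 2 := (norm_sq_projE S v).symm
    have hsq : (c / Real.sqrt n) ^ 2 = c ^ 2 / n := by
      rw [div_pow, Real.sq_sqrt hnR.le]
    have hnsum : (0 : ℝ) ≤ ∑ j ∈ S, ‖v j‖ := Finset.sum_nonneg fun j _ => norm_nonneg _
    have h4 : ‖mulVecE U vS i‖ ^ 2 ≤ (c / Real.sqrt n) ^ 2 * (∑ j ∈ S, ‖v j‖) ^ 2 := by
      rw [← mul_pow]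
      apply sq_le_sq' _ h1
      have : (0:ℝ) ≤ c / Real.sqrt n * ∑ j ∈ S, ‖v j‖ := by positivity
      linarith [norm_nonneg (mulVecE U vS i)]
    calc ‖mulVecE U vS i‖ ^ 2 ≤ (c / Real.sqrt n) ^ 2 * (∑ j ∈ S, ‖v j‖) ^ 2 := h4
      _ ≤ c ^ 2 / n * (S.card * ∑ j ∈ S, ‖v j‖ ^ 2) := by
          rw [hsq]; exact mul_le_mul_of_nonneg_left h2 (by positivity)
      _ = c ^ 2 / n * S.card * ‖vS‖ ^ 2 := by rw [h3]; ring
  -- Sum over T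
  have hTS : ‖projE T (mulVecE U vS)‖ ^ 2 ≤ 1 / 2 := by
    rw [norm_sq_projE]
    calc ∑ i ∈ T, ‖mulVecE U vS i‖ ^ 2 ≤ ∑ _i ∈ T, c ^ 2 / n * S.card * ‖vS‖ ^ 2 :=
          Finset.sum_le_sum fun i _ => hentry i
      _ = T.card * (c ^ 2 / n * S.card * ‖vS‖ ^ 2) := by rw [Finset.sum_const, nsmul_eq_mul]
      _ ≤ 1 / 2 := by
          have h1 : T.card * (c ^ 2 / n * S.card) ≤ 1 / 2 := by
            rw [le_div_iff₀ (by positivity : (0:ℝ) < 2 * c ^ 2)] at hST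
            rw [show (T.card : ℝ) * (c ^ 2 / n * S.card) = (S.card * T.card) * c ^ 2 / n by ring,
              div_le_iff₀ hnR]
            linarith
          have h2 : ‖vS‖ ^ 2 ≤ 1 := by nlinarith [norm_nonneg vS]
          have h3 : (0:ℝ) ≤ T.card * (c ^ 2 / n * S.card) := by positivity
          nlinarith [sq_nonneg ‖vS‖]
  -- second piece
  have hTSc : ‖projE T (mulVecE U vSc)‖ < 1 / 5 := by
    calc ‖projE T (mulVecE U vSc)‖ ≤ ‖mulVecE U vSc‖ := norm_projE_le _ _
      _ = ‖vSc‖ := norm_mulVecE U hU vSc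
      _ < 1 / 5 := ha
  -- combine
  have htri : ‖projE T w‖ ≤ ‖projE T (mulVecE U vS)‖ + ‖projE T (mulVecE U vSc)‖ := by
    rw [hdec]; exact norm_add_le _ _
  have hTS' : ‖projE T (mulVecE U vS)‖ ^ 2 ≤ 1 / 2 := hTS
  exact aux_arith _ _ _ (norm_nonneg _) (norm_nonneg _) (norm_nonneg _) htri hTS' hTSc hTbig
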